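/- Let G = Sp₂ₙ(ℂ). The radical ideal in ℂ[sp₂ₙ] defining the closure of the G-orbit of rank-one matrices in sp₂ₙ(ℂ) is generated by the 2×2 minors of the matrix entries. -/

import Mathlib

open MvPolynomial Matrix

/-- The standard symplectic structure matrix `J = ((0,I),(-I,0))`. -/
noncomputable def Jmat (n : ℕ) : Matrix (Fin n ⊕ Fin n) (Fin n ⊕ Fin n) ℂ :=
  Matrix.of fun p q =>
    match p, q with
    | Sum.inl i, Sum.inr j => if i = j then 1 else 0
    | Sum.inr i, Sum.inl j => if i = j then -1 else 0
    | _, _ => 0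

/-- The matrix of coordinates of a point `z` of the space of `2n × 2n` matrices. -/
noncomputable def matOf (n : ℕ) (z : (Fin n ⊕ Fin n) × (Fin n ⊕ Fin n) → ℂ) :
    Matrix (Fin n ⊕ Fin n) (Fin n ⊕ Fin n) ℂ :=
  Matrix.of fun p q => z (p, q)

/-- The vanishing ideal of a set of points of affine space. -/
noncomputable def vIdeal {σ : Type*} (s : Set (σ → ℂ)) : Ideal (MvPolynomial σ ℂ) where
  carrier := {p | ∀ z ∈ s, MvPolynomial.eval z p = 0}
  add_mem' := by intro a b ha hb z hz; simp [ha z hz, hb z hz]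
  zero_mem' := by intro z hz; simp
  smul_mem' := by intro c p hp z hz; simp [smul_eq_mul, hp z hz]

/-- The linear equations cutting out `sp₂ₙ ⊆ gl₂ₙ`, i.e. the entries of `MᵀJ + JM`. -/
noncomputable def spLinEqns (n : ℕ) :
    Set (MvPolynomial ((Fin n ⊕ Fin n) × (Fin n ⊕ Fin n)) ℂ) :=
  {p | ∃ q r : Fin n ⊕ Fin n,
    p = ∑ k : Fin n ⊕ Fin n,
      (C (Jmat n k r) * X (k, q) + C (Jmat n q k) * X (k, r))}

/-- The `2×2` minors of the matrix of generic coordinates. -/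
noncomputable def minors2 (n : ℕ) :
    Set (MvPolynomial ((Fin n ⊕ Fin n) × (Fin n ⊕ Fin n)) ℂ) :=
  {p | ∃ i₁ i₂ j₁ j₂ : Fin n ⊕ Fin n,
    p = X (i₁, j₁) * X (i₂, j₂) - X (i₁, j₂) * X (i₂, j₁)}

noncomputable section
variable {n : ℕ}

abbrev τ (n : ℕ) := Fin n ⊕ Fin n

def ρ : τ n → τ n := Sum.elim Sum.inr Sum.inl
def sg : τ n → ℂ := Sum.elim (fun _ => 1) (fun _ => -1)

@[simp] lemma ρρ (a : τ n) : ρ (ρ a) = a := by cases a <;> rfl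
@[simp] lemma sg_mul_sg_ρ (a : τ n) : sg a * sg (ρ a) = -1 := by cases a <;> simp [sg, ρ]
@[simp] lemma sg_mul_sg (a : τ n) : sg a * sg a = 1 := by cases a <;> simp [sg]

abbrev Rr (n : ℕ) := MvPolynomial (τ n × τ n) ℂ
abbrev Tt (n : ℕ) := MvPolynomial (τ n) ℂ

def πv : Rr n →ₐ[ℂ] Tt n := aeval fun pq => X pq.1 * X pq.2
def αv : Rr n →ₐ[ℂ] Rr n := aeval fun pq => C (Complex.I * sg pq.2) * X (pq.1, ρ pq.2)

@[simp] lemma πv_X (p q : τ n) : πv (X (p, q) : Rr n) = X p * X q := by simp [πv]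
@[simp] lemma αv_X (p q : τ n) : αv (X (p, q) : Rr n) = C (Complex.I * sg q) * X (p, ρ q) := by
  simp [αv]

lemma αv_αv (f : Rr n) : αv (αv f) = f := by
  have : (αv (n := n)).comp αv = AlgHom.id ℂ (Rr n) := by
    apply MvPolynomial.algHom_ext
    rintro ⟨p, q⟩
    simp only [AlgHom.comp_apply, αv_X, _root_.map_mul, MvPolynomial.algHom_C,
      MvPolynomial.algebraMap_eq, ρρ, AlgHom.id_apply]
    rw [← mul_assoc, ← mul_assoc, ← C_mul, ← C_mul, ← C_mul]
    have : Complex.I * sg q * Complex.I * sg (ρ q) = 1 := by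
      linear_combination sg q * sg (ρ q) * Complex.I_mul_I - sg_mul_sg_ρ q
    rw [this, C_1, one_mul]
  exact AlgHom.congr_fun this f

/-- symmetric-world ideal -/
def symSet (n : ℕ) : Set (Rr n) := {p | ∃ a b : τ n, p = X (a, b) - X (b, a)}

def minors2' (n : ℕ) : Set (Rr n) :=
  {p | ∃ i₁ i₂ j₁ j₂ : τ n, p = X (i₁, j₁) * X (i₂, j₂) - X (i₁, j₂) * X (i₂, j₁)}

def J0 (n : ℕ) : Ideal (Rr n) := Ideal.span (symSet n ∪ minors2' n)

def qmk : Rr n →+* (Rr n ⧸ J0 n) := Ideal.Quotient.mk (J0 n)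

def prodX (M : Multiset (τ n × τ n)) : Rr n := (M.map X).prod
def pY (μ : Multiset (τ n)) : Tt n := (μ.map X).prod
def idx (M : Multiset (τ n × τ n)) : Multiset (τ n) := M.bind fun pq => {pq.1, pq.2}

@[simp] lemma prodX_zero : prodX (0 : Multiset (τ n × τ n)) = 1 := rfl
@[simp] lemma prodX_cons (x : τ n × τ n) (M : Multiset (τ n × τ n)) :
    prodX (x ::ₘ M) = X x * prodX M := by simp [prodX]
@[simp] lemma pY_zero : pY (0 : Multiset (τ n)) = 1 := rfl
@[simp] lemma pY_cons (a : τ n) (μ : Multiset (τ n)) : pY (a ::ₘ μ) = X a * pY μ := by simp [pY]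
@[simp] lemma idx_zero : idx (0 : Multiset (τ n × τ n)) = 0 := rfl
@[simp] lemma idx_cons (x : τ n × τ n) (M : Multiset (τ n × τ n)) :
    idx (x ::ₘ M) = x.1 ::ₘ x.2 ::ₘ idx M := by
  rw [idx, idx, Multiset.cons_bind, Multiset.insert_eq_cons, Multiset.cons_add,
    Multiset.singleton_add]

def rel (a b : τ n) : Prop := (finSumFinEquiv a : ℕ) ≤ finSumFinEquiv b

instance : DecidableRel (rel (n := n)) := fun a b => by unfold rel; infer_instance
instance : IsTrans (τ n) rel := ⟨fun _ _ _ => le_trans⟩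
instance : IsAntisymm (τ n) rel :=
  ⟨fun a b h h' => finSumFinEquiv.injective (Fin.le_antisymm h h')⟩
instance : IsTotal (τ n) rel := ⟨fun a b => le_total _ _⟩

def canonL : List (τ n) → Rr n
  | [] => 1
  | [_] => 0
  | a :: b :: t => X (a, b) * canonL t

def canonM (μ : Multiset (τ n)) : Rr n := canonL (μ.sort rel)

lemma qmk_sym (p q : τ n) : qmk (X (p, q) : Rr n) = qmk (X (q, p)) := by
  rw [qmk, Ideal.Quotient.mk_eq_mk_iff_sub_mem]
  exact Ideal.subset_span (Or.inl ⟨p, q, rfl⟩)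

lemma qmk_swap (p q r s : τ n) (f : Rr n) :
    qmk (X (p, q) * X (r, s) * f) = qmk (X (p, s) * X (r, q) * f) := by
  rw [qmk, Ideal.Quotient.mk_eq_mk_iff_sub_mem, ← sub_mul]
  exact Ideal.mul_mem_right _ _ (Ideal.subset_span (Or.inr ⟨p, r, q, s, rfl⟩))

lemma qmk_prodX_sym (p q : τ n) (M : Multiset (τ n × τ n)) :
    qmk (prodX ((p, q) ::ₘ M)) = qmk (prodX ((q, p) ::ₘ M)) := by
  rw [prodX_cons, prodX_cons, qmk.map_mul, qmk.map_mul, qmk_sym]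

lemma sort_coe_of_sorted {l : List (τ n)} (h : l.Pairwise rel) :
    (l : Multiset (τ n)).sort rel = l :=
  List.Perm.eq_of_pairwise' (Multiset.pairwise_sort _ _) h
    (Multiset.coe_eq_coe.mp (by rw [Multiset.sort_eq]))

lemma lemA : ∀ M : Multiset (τ n × τ n), qmk (prodX M) = qmk (canonM (idx M)) := by
  suffices H : ∀ k (M : Multiset (τ n × τ n)), Multiset.card M = k →
      qmk (prodX M) = qmk (canonM (idx M)) from fun M => H _ M rfl
  intro k
  induction k using Nat.strong_induction_on with
  | _ k ih =>
    intro M hM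
    rcases k with _ | k
    · rw [Multiset.card_eq_zero] at hM
      subst hM; simp [canonM, canonL]
    obtain ⟨x, M', hx⟩ : ∃ x M', M = x ::ₘ M' := by
      rcases M.empty_or_exists_mem with h | ⟨x, hx⟩
      · simp [h] at hM
      · exact ⟨x, M.erase x, (Multiset.cons_erase hx).symm⟩
    rcases hsort : (idx M).sort rel with _ | ⟨a, _ | ⟨b, t⟩⟩
    · exfalso
      have : idx M ≠ 0 := by subst hx; simp
      rw [← Multiset.sort_eq (idx M) rel, hsort] at this; simp at this
    · exfalso
      have h2 : Multiset.card (idx M) = 1 := by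
        rw [← Multiset.length_sort rel, hsort]; rfl
      subst hx
      rw [idx_cons] at h2
      simp only [Multiset.card_cons] at h2
      omega
    have hμ : idx M = (a ::ₘ b ::ₘ (t : Multiset (τ n))) := by
      rw [← Multiset.sort_eq (idx M) rel, hsort]; rfl
    have hsorted : ((a :: b :: t) : List (τ n)).Pairwise rel := by
      rw [← hsort]; exact Multiset.pairwise_sort _ _
    have htsorted : (t : List (τ n)).Pairwise rel := (List.pairwise_cons.mp
      (List.pairwise_cons.mp hsorted).2).2
    have hcanon : canonM (idx M) = X (a, b) * canonM (t : Multiset (τ n)) := by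
      rw [canonM, hsort, canonL, canonM, sort_coe_of_sorted htsorted]
    have haM : a ∈ idx M := by rw [hμ]; exact Multiset.mem_cons_self _ _
    obtain ⟨pq, hpqM, hapq⟩ : ∃ pq ∈ M, a = pq.1 ∨ a = pq.2 := by
      rw [idx, Multiset.mem_bind] at haM
      obtain ⟨pq, h1, h2⟩ := haM
      exact ⟨pq, h1, by simpa [Multiset.insert_eq_cons] using h2⟩
    have hMeq : M = pq ::ₘ M.erase pq := (Multiset.cons_erase hpqM).symm
    obtain ⟨p1, p2⟩ := pq
    set M₂ := M.erase (p1, p2) with hM₂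
    obtain ⟨c, hkey, hidx⟩ : ∃ c, qmk (prodX M) = qmk (prodX ((a, c) ::ₘ M₂)) ∧
        idx M = a ::ₘ c ::ₘ idx M₂ := by
      rcases hapq with h | h
      · subst h
        exact ⟨p2, by rw [hMeq], by rw [hMeq, idx_cons]⟩
      · subst h
        exact ⟨p1, by rw [hMeq, qmk_prodX_sym], by rw [hMeq, idx_cons, Multiset.cons_swap]⟩
    have hcard₂ : Multiset.card M₂ = k := by
      have := congrArg Multiset.card hMeq
      rw [hM, Multiset.card_cons] at this
      omega
    have hbt : b ::ₘ (t : Multiset (τ n)) = c ::ₘ idx M₂ :=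
      (Multiset.cons_inj_right a).mp (hμ.symm.trans hidx)
    by_cases hcb : c = b
    · subst hcb
      have ht2 : idx M₂ = (t : Multiset (τ n)) := ((Multiset.cons_inj_right c).mp hbt).symm
      rw [hkey, prodX_cons, _root_.map_mul, ih k (Nat.lt_succ_self k) M₂ hcard₂, ht2, hcanon,
        _root_.map_mul]
    · have hbM₂ : b ∈ idx M₂ := by
        have : b ∈ c ::ₘ idx M₂ := by rw [← hbt]; exact Multiset.mem_cons_self _ _
        rcases Multiset.mem_cons.mp this with h | h
        · exact absurd h.symm hcb
        · exact h
      obtain ⟨rs, hrsM₂, hbrs⟩ : ∃ rs ∈ M₂, b = rs.1 ∨ b = rs.2 := by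
        rw [idx, Multiset.mem_bind] at hbM₂
        obtain ⟨rs, h1, h2⟩ := hbM₂
        exact ⟨rs, h1, by simpa [Multiset.insert_eq_cons] using h2⟩
      have hM₂eq : M₂ = rs ::ₘ M₂.erase rs := (Multiset.cons_erase hrsM₂).symm
      obtain ⟨r1, r2⟩ := rs
      set M₃ := M₂.erase (r1, r2) with hM₃
      obtain ⟨d, hkey₂, hidx₂⟩ : ∃ d,
          qmk (prodX ((a, c) ::ₘ M₂)) = qmk (prodX ((a, c) ::ₘ (d, b) ::ₘ M₃)) ∧
          idx M₂ = d ::ₘ b ::ₘ idx M₃ := by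
        rcases hbrs with h | h
        · subst h
          refine ⟨r2, ?_, by rw [hM₂eq, idx_cons, Multiset.cons_swap]⟩
          rw [hM₂eq, Multiset.cons_swap, qmk_prodX_sym b r2, Multiset.cons_swap]
        · subst h
          exact ⟨r1, by rw [hM₂eq], by rw [hM₂eq, idx_cons]⟩
      have hswap : qmk (prodX ((a, c) ::ₘ (d, b) ::ₘ M₃)) =
          qmk (prodX ((a, b) ::ₘ (d, c) ::ₘ M₃)) := by
        rw [prodX_cons, prodX_cons, prodX_cons, prodX_cons, ← mul_assoc, ← mul_assoc, qmk_swap]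
      have hcard₃ : Multiset.card ((d, c) ::ₘ M₃) = k := by
        have := congrArg Multiset.card hM₂eq
        rw [hcard₂, Multiset.card_cons] at this
        rw [Multiset.card_cons]
        omega
      have ht3 : idx ((d, c) ::ₘ M₃) = (t : Multiset (τ n)) := by
        rw [idx_cons]
        have h1 : b ::ₘ (t : Multiset (τ n)) = b ::ₘ c ::ₘ d ::ₘ idx M₃ := by
          rw [hbt, hidx₂, Multiset.cons_swap d b, Multiset.cons_swap c b]
        have h2 := (Multiset.cons_inj_right b).mp h1
        rw [h2, Multiset.cons_swap]
      rw [hkey, hkey₂, hswap, prodX_cons, _root_.map_mul,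
        ih k (Nat.lt_succ_self k) _ hcard₃, ht3, hcanon, _root_.map_mul]

lemma lemC (M : Multiset (τ n × τ n)) : πv (prodX M) = pY (idx M) := by
  induction M using Multiset.induction_on with
  | empty => simp
  | cons x M ih =>
    obtain ⟨p, q⟩ := x
    rw [prodX_cons, _root_.map_mul, ih, idx_cons, pY_cons, pY_cons, πv_X, mul_assoc]

lemma lemB : ∀ l : List (τ n), Even l.length → πv (canonL l) = pY (l : Multiset (τ n)) := by
  intro l
  induction l using canonL.induct (n := n) with
  | case1 => simp [canonL]
  | case2 a => intro h; simp at h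
  | case3 a b t ih =>
    intro h
    have ht : Even (t.length) := by
      rw [Nat.even_iff] at h ⊢
      simp only [List.length_cons] at h
      omega
    rw [canonL, _root_.map_mul, ih ht, πv_X]
    show _ = pY (a ::ₘ b ::ₘ (t : Multiset (τ n)))
    rw [pY_cons, pY_cons, mul_assoc]

lemma even_card_idx (M : Multiset (τ n × τ n)) : Even (Multiset.card (idx M)) := by
  induction M using Multiset.induction_on with
  | empty => simp
  | cons x M ih =>
    rw [idx_cons, Multiset.card_cons, Multiset.card_cons]
    rw [Nat.even_iff] at ih ⊢
    omega

lemma πv_canonM {μ : Multiset (τ n)} (h : Even (Multiset.card μ)) : πv (canonM μ) = pY μ := by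
  rw [canonM, lemB _ (by rwa [Multiset.length_sort])]
  congr 1
  exact Multiset.sort_eq _ _

lemma toFinsupp_cons' {β : Type*} [DecidableEq β] (x : β) (M : Multiset β) :
    Multiset.toFinsupp (x ::ₘ M) = Finsupp.single x 1 + Multiset.toFinsupp M := by
  rw [← Multiset.singleton_add, Multiset.toFinsupp_add, Multiset.toFinsupp_singleton]

lemma prodX_eq_monomial (M : Multiset (τ n × τ n)) :
    prodX M = monomial M.toFinsupp 1 := by
  induction M using Multiset.induction_on with
  | empty => simp
  | cons x M ih =>
    rw [prodX_cons, ih, toFinsupp_cons', X, monomial_mul, one_mul]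

lemma pY_eq_monomial (μ : Multiset (τ n)) : pY μ = monomial μ.toFinsupp 1 := by
  induction μ using Multiset.induction_on with
  | empty => simp
  | cons x μ ih =>
    rw [pY_cons, ih, toFinsupp_cons', X, monomial_mul, one_mul]

def Lmap (f : Tt n) : Rr n := Finsupp.sum (AddMonoidAlgebra.coeff f) fun e c => c • canonM (Finsupp.toMultiset e)

lemma Lmap_add (f g : Tt n) : Lmap (f + g) = Lmap f + Lmap g := by
  rw [Lmap, Lmap, Lmap, AddMonoidAlgebra.coeff_add]
  apply Finsupp.sum_add_index
  · intro e _; simp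
  · intro e _ c c'; rw [add_smul]

lemma Lmap_monomial (e : τ n →₀ ℕ) (c : ℂ) :
    Lmap (monomial e c) = c • canonM (Finsupp.toMultiset e) := by
  rw [Lmap, ← single_eq_monomial, AddMonoidAlgebra.coeff_single, Finsupp.sum_single_index]
  simp

lemma keyId (f : Rr n) : qmk f = qmk (Lmap (πv f)) := by
  induction f using MvPolynomial.induction_on' with
  | add p q ihp ihq => rw [_root_.map_add, _root_.map_add, Lmap_add, _root_.map_add, ihp, ihq]
  | monomial d c =>
    have hmon : (monomial d c : Rr n) = C c * prodX (Finsupp.toMultiset d) := by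
      rw [prodX_eq_monomial, Finsupp.toMultiset_toFinsupp, C_mul_monomial, mul_one]
    have hπ : πv (monomial d c : Rr n) =
        monomial (Multiset.toFinsupp (idx (Finsupp.toMultiset d))) c := by
      rw [hmon, _root_.map_mul, algHom_C, MvPolynomial.algebraMap_eq, lemC, pY_eq_monomial, C_mul_monomial, mul_one]
    rw [hπ, Lmap_monomial, Multiset.toFinsupp_toMultiset, smul_eq_C_mul, _root_.map_mul,
      ← lemA, hmon, _root_.map_mul]

lemma core (f : Rr n) (h : πv f = 0) : f ∈ J0 n := by
  have := keyId f
  rw [h] at this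
  rw [← Ideal.Quotient.eq_zero_iff_mem]
  rw [show Lmap (0 : Tt n) = 0 by rw [Lmap, AddMonoidAlgebra.coeff_zero]; exact Finsupp.sum_zero_index, _root_.map_zero] at this
  exact this

end


noncomputable section
variable {n : ℕ}

lemma Jmat_eq₁ (k r : τ n) : Jmat n k r = if k = ρ r then -sg r else 0 := by
  cases k <;> cases r <;> simp [Jmat, ρ, sg, Sum.inl.injEq, Sum.inr.injEq, eq_comm] <;>
    split <;> simp_all

lemma Jmat_eq₂ (q k : τ n) : Jmat n q k = if k = ρ q then sg q else 0 := by
  cases q <;> cases k <;> simp [Jmat, ρ, sg, Sum.inl.injEq, Sum.inr.injEq, eq_comm] <;>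
    split <;> simp_all

lemma spLin_eq (q r : τ n) :
    (∑ k : τ n, (C (Jmat n k r) * X (k, q) + C (Jmat n q k) * X (k, r)) : Rr n)
      = C (-sg r) * X (ρ r, q) + C (sg q) * X (ρ q, r) := by
  rw [Finset.sum_add_distrib]
  congr 1
  · simp_rw [Jmat_eq₁]
    simp [apply_ite C, ite_mul, Finset.sum_ite_eq']
  · simp_rw [Jmat_eq₂]
    simp [apply_ite C, ite_mul, Finset.sum_ite_eq']
end

noncomputable section
variable {n : ℕ}

@[simp] lemma sg_ρ (a : τ n) : sg (ρ a) = -sg a := by cases a <;> simp [sg, ρ]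

lemma spLin_mem (q r : τ n) :
    (C (-sg r) * X (ρ r, q) + C (sg q) * X (ρ q, r) : Rr n)
      ∈ Ideal.span (spLinEqns n ∪ minors2 n) := by
  rw [← spLin_eq]
  exact Ideal.subset_span (Or.inl ⟨q, r, rfl⟩)

lemma αv_sym_mem (p q : τ n) :
    αv (X (p, q) - X (q, p) : Rr n) ∈ Ideal.span (spLinEqns n ∪ minors2 n) := by
  have h := Ideal.mul_mem_left _ (C (Complex.I * sg q * sg p)) (spLin_mem (ρ q) (ρ p))
  convert h using 1
  rw [map_sub, αv_X, αv_X, mul_add, ← mul_assoc, ← mul_assoc, ← C_mul, ← C_mul, ρρ, ρρ,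
    sg_ρ, sg_ρ]
  have h1 : Complex.I * sg q * sg p * - -sg p = Complex.I * sg q := by
    rw [neg_neg, mul_assoc, sg_mul_sg, mul_one]
  have h2 : Complex.I * sg q * sg p * -sg q = -(Complex.I * sg p) := by
    rw [show Complex.I * sg q * sg p * -sg q = -(Complex.I * sg p * (sg q * sg q)) by ring,
      sg_mul_sg, mul_one]
  rw [h1, h2, map_neg, neg_mul, ← sub_eq_add_neg]

lemma αv_minor_mem (i₁ i₂ j₁ j₂ : τ n) :
    αv (X (i₁, j₁) * X (i₂, j₂) - X (i₁, j₂) * X (i₂, j₁) : Rr n)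
      ∈ Ideal.span (spLinEqns n ∪ minors2 n) := by
  have hmem : (X (i₁, ρ j₁) * X (i₂, ρ j₂) - X (i₁, ρ j₂) * X (i₂, ρ j₁) : Rr n)
      ∈ Ideal.span (spLinEqns n ∪ minors2 n) :=
    Ideal.subset_span (Or.inr ⟨i₁, i₂, ρ j₁, ρ j₂, rfl⟩)
  have h := Ideal.mul_mem_left _ (C (Complex.I * sg j₁ * (Complex.I * sg j₂))) hmem
  convert h using 1
  rw [map_sub, _root_.map_mul, _root_.map_mul, αv_X, αv_X, αv_X, αv_X]
  have e1 : (C (Complex.I * sg j₁) * X (i₁, ρ j₁) * (C (Complex.I * sg j₂) * X (i₂, ρ j₂)) : Rr n)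
      = C (Complex.I * sg j₁ * (Complex.I * sg j₂)) * (X (i₁, ρ j₁) * X (i₂, ρ j₂)) := by
    rw [mul_mul_mul_comm, ← C_mul]
  have e2 : (C (Complex.I * sg j₂) * X (i₁, ρ j₂) * (C (Complex.I * sg j₁) * X (i₂, ρ j₁)) : Rr n)
      = C (Complex.I * sg j₁ * (Complex.I * sg j₂)) * (X (i₁, ρ j₂) * X (i₂, ρ j₁)) := by
    rw [mul_mul_mul_comm, ← C_mul, mul_comm (Complex.I * sg j₂)]
  rw [e1, e2, mul_sub]
end

noncomputable section
variable {n : ℕ}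

lemma rank_le_one_outer (u w : τ n → ℂ) :
    (Matrix.of fun p q => u p * w q : Matrix (τ n) (τ n) ℂ).rank ≤ 1 := by
  have h : (Matrix.of fun p q => u p * w q : Matrix (τ n) (τ n) ℂ)
      = Matrix.replicateCol Unit u * Matrix.replicateRow Unit w := by
    ext p q
    simp [Matrix.mul_apply, Matrix.replicateCol, Matrix.replicateRow]
  rw [h]
  refine le_trans (Matrix.rank_mul_le_left _ _) ?_
  simpa using Matrix.rank_le_card_width (Matrix.replicateCol Unit u)

lemma outer_of_rank_le_one {M : Matrix (τ n) (τ n) ℂ} (h : M.rank ≤ 1) :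
    ∃ u w : τ n → ℂ, ∀ p q, M p q = u p * w q := by
  by_cases h0 : M = 0
  · exact ⟨0, 0, by simp [h0]⟩
  obtain ⟨p0, q0, hpq⟩ : ∃ p0 q0, M p0 q0 ≠ 0 := by
    by_contra hc
    push_neg at hc
    exact h0 (by ext p q; simpa using hc p q)
  have hrank : M.rank = Module.finrank ℂ (Submodule.span ℂ (Set.range Mᵀ)) := by
    rw [Matrix.rank, Matrix.range_mulVecLin]
    rfl
  have hc0 : Mᵀ q0 ≠ 0 := by
    intro hh
    exact hpq (by simpa using congrFun hh p0)
  have hle : Submodule.span ℂ {Mᵀ q0} ≤ Submodule.span ℂ (Set.range Mᵀ) :=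
    Submodule.span_mono (by simp [Set.singleton_subset_iff]; exact Set.mem_range_self q0)
  have heq : Submodule.span ℂ {Mᵀ q0} = Submodule.span ℂ (Set.range Mᵀ) := by
    apply Submodule.eq_of_le_of_finrank_le hle
    rw [← hrank, finrank_span_singleton hc0]
    exact h
  have hcol : ∀ q, ∃ a : ℂ, a • Mᵀ q0 = Mᵀ q := by
    intro q
    have : Mᵀ q ∈ Submodule.span ℂ {Mᵀ q0} := by
      rw [heq]
      exact Submodule.subset_span ⟨q, rfl⟩
    exact Submodule.mem_span_singleton.mp this
  choose a ha using hcol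
  refine ⟨fun p => M p q0, a, fun p q => ?_⟩
  have := congrFun (ha q) p
  simp only [Pi.smul_apply, smul_eq_mul, Matrix.transpose_apply] at this
  rw [← this, mul_comm]
end

noncomputable section
variable {n : ℕ}

lemma sum_J_left (w : τ n → ℂ) (r : τ n) :
    ∑ k : τ n, Jmat n k r * w k = -sg r * w (ρ r) := by
  simp_rw [Jmat_eq₁]
  simp [ite_mul, Finset.sum_ite_eq']

lemma sum_J_right (w : τ n → ℂ) (q : τ n) :
    ∑ k : τ n, Jmat n q k * w k = sg q * w (ρ q) := by
  simp_rw [Jmat_eq₂]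
  simp [ite_mul, Finset.sum_ite_eq']

def Spts (n : ℕ) : Set ((τ n × τ n) → ℂ) :=
  {z | (matOf n z)ᵀ * Jmat n + Jmat n * matOf n z = 0 ∧ (matOf n z).rank ≤ 1}

lemma entry_lin {z : (τ n × τ n) → ℂ} (hz : z ∈ Spts n) (q r : τ n) :
    -sg r * z (ρ r, q) + sg q * z (ρ q, r) = 0 := by
  have h := congrFun (congrFun hz.1 q) r
  have h1 : ((matOf n z)ᵀ * Jmat n) q r = ∑ k : τ n, Jmat n k r * z (k, q) := by
    rw [Matrix.mul_apply]
    exact Finset.sum_congr rfl fun k _ => mul_comm _ _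
  have h2 : (Jmat n * matOf n z) q r = ∑ k : τ n, Jmat n q k * z (k, r) := by
    rw [Matrix.mul_apply]; rfl
  rw [Matrix.add_apply, h1, h2, sum_J_left (fun k => z (k, q)), sum_J_right (fun k => z (k, r))]
    at h
  exact h

lemma param_mem (v : τ n → ℂ) :
    (fun pq : τ n × τ n => Complex.I * sg pq.2 * v pq.1 * v (ρ pq.2)) ∈ Spts n := by
  set z : τ n × τ n → ℂ := fun pq => Complex.I * sg pq.2 * v pq.1 * v (ρ pq.2) with hz
  constructor
  · ext q r
    have h1 : ((matOf n z)ᵀ * Jmat n) q r = ∑ k : τ n, Jmat n k r * z (k, q) := by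
      rw [Matrix.mul_apply]
      exact Finset.sum_congr rfl fun k _ => mul_comm _ _
    have h2 : (Jmat n * matOf n z) q r = ∑ k : τ n, Jmat n q k * z (k, r) := by
      rw [Matrix.mul_apply]; rfl
    rw [Matrix.add_apply, h1, h2, sum_J_left (fun k => z (k, q)),
      sum_J_right (fun k => z (k, r)), Matrix.zero_apply]
    simp only [hz]
    ring
  · have : matOf n z = Matrix.of fun p q => v p * (Complex.I * sg q * v (ρ q)) := by
      ext p q
      show z (p, q) = _
      simp only [hz, Matrix.of_apply]
      ring
    rw [this]
    exact rank_le_one_outer _ _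
end

lemma aeval_eq_eval' {σ : Type*} (x : σ → ℂ) (p : MvPolynomial σ ℂ) :
    MvPolynomial.aeval x p = MvPolynomial.eval x p := by
  rw [← MvPolynomial.coe_aeval_eq_eval]
  rfl

theorem stmt13' (n : ℕ) :
    Ideal.span (spLinEqns n ∪ minors2 n) =
      vIdeal {z : (Fin n ⊕ Fin n) × (Fin n ⊕ Fin n) → ℂ |
        (matOf n z)ᵀ * Jmat n + Jmat n * matOf n z = 0 ∧ (matOf n z).rank ≤ 1} := by
  apply le_antisymm
  · rw [Ideal.span_le]
    rintro g (⟨q, r, rfl⟩ | ⟨i₁, i₂, j₁, j₂, rfl⟩)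
    · show ∀ z ∈ _, _
      intro z hz
      rw [spLin_eq, map_add, _root_.map_mul, _root_.map_mul, eval_C, eval_C, eval_X, eval_X]
      exact entry_lin hz q r
    · show ∀ z ∈ _, _
      intro z hz
      obtain ⟨u, w, huw⟩ := outer_of_rank_le_one hz.2
      have hzval : ∀ p q : τ n, z (p, q) = u p * w q := fun p q => huw p q
      rw [map_sub, _root_.map_mul, _root_.map_mul, eval_X, eval_X, eval_X, eval_X,
        hzval, hzval, hzval, hzval]
      ring
  · intro f hf
    have hf' : ∀ z ∈ Spts n, MvPolynomial.eval z f = 0 := hf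
    have hφ : πv (αv f) = 0 := by
      apply MvPolynomial.funext
      intro v
      rw [_root_.map_zero]
      have hcomp : ((MvPolynomial.aeval v : Tt n →ₐ[ℂ] ℂ).comp (πv.comp αv))
          = MvPolynomial.aeval
              (fun pq : τ n × τ n => Complex.I * sg pq.2 * v pq.1 * v (ρ pq.2)) := by
        apply MvPolynomial.algHom_ext
        rintro ⟨p, q⟩
        simp only [AlgHom.comp_apply, αv_X, _root_.map_mul, πv_X, aeval_X, aeval_C,
          MvPolynomial.algHom_C, MvPolynomial.algebraMap_eq, Algebra.algebraMap_self,
          RingHom.id_apply]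
        ring
      have h2 := AlgHom.congr_fun hcomp f
      simp only [AlgHom.comp_apply] at h2
      rw [aeval_eq_eval'] at h2
      rw [aeval_eq_eval'] at h2
      rw [h2]
      exact hf' _ (param_mem v)
    have hJ0 : αv f ∈ J0 n := core _ hφ
    have hf2 : f ∈ Ideal.map (αv : Rr n →ₐ[ℂ] Rr n) (J0 n) := by
      rw [show f = αv (αv f) from (αv_αv f).symm]
      exact Ideal.mem_map_of_mem _ hJ0
    rw [J0, Ideal.map_span] at hf2
    refine Ideal.span_le.mpr ?_ hf2
    rintro g ⟨g', hg', rfl⟩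
    rcases hg' with ⟨a, b, rfl⟩ | ⟨i₁, i₂, j₁, j₂, rfl⟩
    · exact αv_sym_mem a b
    · exact αv_minor_mem i₁ i₂ j₁ j₂

/-- the (radical) vanishing ideal of the closure of the orbit of
rank-one matrices in `sp₂ₙ(ℂ)` — i.e. of the set of matrices `M ∈ sp₂ₙ` with
`rank M ≤ 1` — is generated by the `2×2` minors together with the linear equations
defining `sp₂ₙ` inside `gl₂ₙ`. -/
theorem stmt13 (n : ℕ) :
    Ideal.span (spLinEqns n ∪ minors2 n) =
      vIdeal {z : (Fin n ⊕ Fin n) × (Fin n ⊕ Fin n) → ℂ |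
        (matOf n z)ᵀ * Jmat n + Jmat n * matOf n z = 0 ∧ (matOf n z).rank ≤ 1} :=
  stmt13' n
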